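/- Let Γ ∈ Mat_n(ℂ) be such that Γ and −Γ† have no common eigenvalue, let η₁ ∈ ℂⁿ (column vector), and let Ω₁ be the unique solution of the Lyapunov equation Γ Ω₁ + Ω₁ Γ† = i η₁ η₁† Γ†. Then (Γ Ω₁)† = −Γ Ω₁. -/

import Mathlib

open Matrix Polynomial

lemma eval_charpoly_eq_det {n : ℕ} (A : Matrix (Fin n) (Fin n) ℂ) (r : ℂ) :
    A.charpoly.eval r = (r • (1 : Matrix (Fin n) (Fin n) ℂ) - A).det := by
  rw [Matrix.charpoly, ← Polynomial.coe_evalRingHom, RingHom.map_det]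
  congr 1
  ext i j
  by_cases h : i = j <;>
    simp [h, Matrix.charmatrix_apply, Matrix.diagonal_apply, Matrix.one_apply,
      Matrix.sub_apply, Matrix.smul_apply]

lemma root_charpoly_mem_spectrum {n : ℕ} (A : Matrix (Fin n) (Fin n) ℂ)
    (r : ℂ) (hr : A.charpoly.IsRoot r) : r ∈ spectrum ℂ A := by
  rw [spectrum.mem_iff]
  intro hu
  have hdet : IsUnit (algebraMap ℂ (Matrix (Fin n) (Fin n) ℂ) r - A).det :=
    (Matrix.isUnit_iff_isUnit_det _).mp hu
  have halg : algebraMap ℂ (Matrix (Fin n) (Fin n) ℂ) r = r • 1 := by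
    rw [Algebra.algebraMap_eq_smul_one]
  rw [halg] at hdet
  rw [Polynomial.IsRoot, eval_charpoly_eq_det] at hr
  rw [hr] at hdet
  exact (isUnit_iff_ne_zero.mp hdet) rfl

/-- If `Γ` and `-Γᴴ` have no common eigenvalue and `Ω₁` solves the Lyapunov
equation `ΓΩ₁ + Ω₁Γᴴ = i η₁η₁ᴴ Γᴴ`, then `(ΓΩ₁)ᴴ = -ΓΩ₁`. -/
theorem stmt10 (n : ℕ) (Γ Ω₁ : Matrix (Fin n) (Fin n) ℂ) (η₁ : Fin n → ℂ)
    (hspec : spectrum ℂ Γ ∩ spectrum ℂ (-Γᴴ) = ∅)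
    (hΩ : Γ * Ω₁ + Ω₁ * Γᴴ = Complex.I • (vecMulVec η₁ (star η₁) * Γᴴ)) :
    (Γ * Ω₁)ᴴ = -(Γ * Ω₁) := by
  set B := -Γᴴ with hB
  set N := vecMulVec η₁ (star η₁) with hNdef
  have hN : Nᴴ = N := by
    ext i j
    simp [hNdef, Matrix.conjTranspose_apply, Matrix.vecMulVec_apply, mul_comm]
  have hΩ' : Γ * Ω₁ᴴ + Ω₁ᴴ * Γᴴ = (-Complex.I) • (Γ * N) := by
    have h := congrArg conjTranspose hΩ
    simp only [Matrix.conjTranspose_add, Matrix.conjTranspose_mul,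
      Matrix.conjTranspose_smul, hN, Matrix.conjTranspose_conjTranspose,
      Complex.star_def, Complex.conj_I] at h
    rw [add_comm] at h
    convert h using 2
  set Y := Γ * Ω₁ + (Γ * Ω₁)ᴴ with hY
  have key : Γ * Y = Y * B := by
    have expand : Γ * Y - Y * B = Γ * (Γ * Ω₁ + Ω₁ * Γᴴ) + (Γ * Ω₁ᴴ + Ω₁ᴴ * Γᴴ) * Γᴴ := by
      simp only [hY, hB, Matrix.conjTranspose_mul]
      noncomm_ring
    have hz : Γ * Y - Y * B = 0 := by
      rw [expand, hΩ, hΩ']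
      simp [mul_smul_comm, smul_mul_assoc, mul_assoc]
    exact sub_eq_zero.mp hz
  have hpow : ∀ k : ℕ, Γ ^ k * Y = Y * B ^ k := by
    intro k
    induction k with
    | zero => simp
    | succ m ih =>
      rw [pow_succ, pow_succ]
      calc Γ ^ m * Γ * Y = Γ ^ m * (Γ * Y) := by rw [mul_assoc]
        _ = Γ ^ m * (Y * B) := by rw [key]
        _ = Γ ^ m * Y * B := by rw [mul_assoc]
        _ = Y * B ^ m * B := by rw [ih]
        _ = Y * (B ^ m * B) := by rw [mul_assoc]
  have hpoly : ∀ p : ℂ[X], (aeval Γ p) * Y = Y * (aeval B p) := by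
    intro p
    rw [Polynomial.aeval_eq_sum_range (x := Γ), Polynomial.aeval_eq_sum_range (x := B),
      Finset.sum_mul, Finset.mul_sum]
    exact Finset.sum_congr rfl fun i _ => by
      rw [smul_mul_assoc, mul_smul_comm, hpow]
  have h0 : Y * aeval B Γ.charpoly = 0 := by
    rw [← hpoly, Matrix.aeval_self_charpoly, zero_mul]
  have hunit : IsUnit (aeval B Γ.charpoly) := by
    have hsplits : Γ.charpoly.Splits := IsAlgClosed.splits _
    have hfact := hsplits.eq_prod_roots_of_monic Γ.charpoly_monic
    by_contra hc
    rw [hfact] at hc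
    obtain ⟨k, hkB, hkp⟩ := spectrum.exists_mem_of_not_isUnit_aeval_prod hc
    have hkΓ : k ∈ spectrum ℂ Γ := root_charpoly_mem_spectrum Γ k hkp
    have : k ∈ spectrum ℂ Γ ∩ spectrum ℂ (-Γᴴ) := ⟨hkΓ, hkB⟩
    rw [hspec] at this
    exact this
  have hY0 : Y = 0 := by
    have := h0
    rw [show (0 : Matrix (Fin n) (Fin n) ℂ) = 0 * aeval B Γ.charpoly by rw [zero_mul]] at this
    exact hunit.mul_right_cancel this
  have : Γ * Ω₁ + (Γ * Ω₁)ᴴ = 0 := hY0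
  exact eq_neg_of_add_eq_zero_right this
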